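/- Let N ≥ 1 be an integer and f : I → ℝ of class C^N with ‖f^{(j)}‖_I ≤ M_j for all 0 ≤ j ≤ N. Let 1 ≤ m ≤ N and let z_1 ≤ z_2 ≤ ⋯ ≤ z_m be points of I listing some zeros of f with multiplicities, i.e. for every point z occurring exactly k times in the list one has f^{(i)}(z) = 0 for all 0 ≤ i ≤ k−1. Let x_{−1} ∈ I with x_{−1} ∉ (z_1, z_m), set b_0(x_{−1}) := max_{0 ≤ j ≤ N} |f^{(j)}(x_{−1})|/(e^j·M_j), assume b_0(x_{−1}) > 0, and let j_0 := min{j ∈ ℕ : j ≥ log(1/b_0(x_{−1}))}. Then the length of I satisfies |I| > (1/e)·Σ_{j=j_0+1}^{m} 1/μ_j, and consequently m ≤ 𝔡_{|I|μ}(b_0(x_{−1})). -/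

import Mathlib

/-- `jZero b = min { j : ℕ | j ≥ log (1/b) }`. -/
noncomputable def jZero (b : ℝ) : ℕ := sInf {j : ℕ | Real.log (1 / b) ≤ (j : ℝ)}

/-- The `(aμ)`-degree `𝔡_{aμ}(b) = sup { n : ℕ | ∑_{j = jZero b + 1}^{n} 1/(a·μ_j) < e }`,
as an element of `ℕ∞`. -/
noncomputable def bangDegree (μ : ℕ → ℝ) (a b : ℝ) : ℕ∞ :=
  sSup ((fun n : ℕ => (n : ℕ∞)) ''
    {n : ℕ | ∑ j ∈ Finset.Ioc (jZero b) n, 1 / (a * μ j) < Real.exp 1})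

/-- `bFun f M N n t = max_{n ≤ j ≤ N} |f^(j)(t)| / (e^j M_j)`. -/
noncomputable def bFun (f : ℝ → ℝ) (M : ℕ → ℝ) (N n : ℕ) (t : ℝ) : ℝ :=
  sSup ((fun j => |iteratedDeriv j f t| / (Real.exp 1 ^ j * M j)) '' Set.Icc n N)

namespace Stmt3Aux

open Set Finset intervalIntegral

/-- Partial sums of the exponential series. -/
noncomputable def Efun (d : ℕ) (u : ℝ) : ℝ :=
  ∑ i ∈ Finset.range (d + 1), u ^ i / (Nat.factorial i : ℝ)

lemma Efun_nonneg (d : ℕ) {u : ℝ} (hu : 0 ≤ u) : 0 ≤ Efun d u := by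
  apply Finset.sum_nonneg
  intro i _
  positivity

lemma Efun_mono (d : ℕ) {u v : ℝ} (hu : 0 ≤ u) (huv : u ≤ v) : Efun d u ≤ Efun d v := by
  apply Finset.sum_le_sum
  intro i _
  gcongr

lemma Efun_zero (d : ℕ) : Efun d 0 = 1 := by
  unfold Efun
  rw [Finset.sum_eq_single 0]
  · simp
  · intro i _ hi
    rw [zero_pow hi]; simp
  · simp

lemma Efun_lt_exp_one (d : ℕ) : Efun d 1 < Real.exp 1 := by
  have h := Real.sum_le_exp_of_nonneg (by norm_num : (0:ℝ) ≤ 1) (d + 2)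
  rw [Finset.sum_range_succ] at h
  have hpos : (0:ℝ) < 1 ^ (d+1) / (Nat.factorial (d+1) : ℝ) := by positivity
  unfold Efun
  linarith

lemma Efun_hasDerivAt (d : ℕ) (X s τ : ℝ) :
    HasDerivAt (fun u => Efun (d + 1) (X * (u - s))) (X * Efun d (X * (τ - s))) τ := by
  have hterm : ∀ i : ℕ, HasDerivAt (fun u : ℝ => (X * (u - s)) ^ i / (Nat.factorial i : ℝ))
      ((i : ℝ) * (X * (τ - s)) ^ (i - 1) * X / (Nat.factorial i : ℝ)) τ := by
    intro i
    have h1 : HasDerivAt (fun u : ℝ => X * (u - s)) X τ := by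
      simpa using ((hasDerivAt_id τ).sub_const s).const_mul X
    exact (h1.pow i).div_const _
  have hsum := HasDerivAt.sum (fun i (_ : i ∈ Finset.range (d + 2)) => hterm i)
  have heq : ∑ i ∈ Finset.range (d + 2),
      (i : ℝ) * (X * (τ - s)) ^ (i - 1) * X / (Nat.factorial i : ℝ)
      = X * Efun d (X * (τ - s)) := by
    rw [Finset.sum_range_succ']
    simp only [Nat.cast_zero, zero_mul, Nat.factorial_zero, Nat.cast_one, zero_div, add_zero]
    rw [Efun, Finset.mul_sum]
    apply Finset.sum_congr rfl
    intro i _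
    have : (Nat.factorial (i+1) : ℝ) = (i+1) * Nat.factorial i := by
      push_cast [Nat.factorial_succ]; ring
    rw [this]
    have hi : (Nat.factorial i : ℝ) ≠ 0 := by positivity
    field_simp
    rw [Nat.add_sub_cancel]
    push_cast
    ring
  rw [← heq]
  have hfun : (fun u => Efun (d + 1) (X * (u - s)))
      = ∑ i ∈ Finset.range (d + 2), fun u : ℝ => (X * (u - s)) ^ i / (Nat.factorial i : ℝ) := by
    ext u
    simp only [Finset.sum_apply]
    rfl
  rw [hfun]
  exact hsum

lemma continuousOn_sup' {ι : Type*} (s : Finset ι) (hs : s.Nonempty) (F : ι → ℝ → ℝ)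
    (A : Set ℝ) (h : ∀ i ∈ s, ContinuousOn (F i) A) :
    ContinuousOn (fun t => s.sup' hs fun i => F i t) A := by
  intro τ hτ
  exact Filter.Tendsto.finset_sup'_nhds_apply hs (fun i hi => h i hi τ hτ)

lemma Efun_cont (d : ℕ) (X s : ℝ) : Continuous (fun u : ℝ => Efun d (X * (u - s))) := by
  unfold Efun
  apply continuous_finset_sum
  intro i _
  exact ((continuous_const.mul (continuous_id.sub continuous_const)).pow i).div_const _

lemma key (f : ℝ → ℝ) (α β : ℝ) (M μ : ℕ → ℝ)
    (Mpos : ∀ i, 0 < M i) (hMrec : ∀ i, M (i + 1) = M i * μ (i + 1))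
    (μpos : ∀ i, 1 ≤ i → 0 < μ i) (μmono : ∀ i i', 1 ≤ i → i ≤ i' → μ i ≤ μ i')
    (k j : ℕ) (hjk : j ≤ k)
    (hderiv : ∀ l ≤ k, ∀ τ ∈ Set.Icc α β,
      HasDerivAt (iteratedDeriv l f) (iteratedDeriv (l + 1) f τ) τ)
    (hcont : ∀ l ≤ k + 1, ContinuousOn (iteratedDeriv l f) (Set.Icc α β))
    (hcap : ∀ τ ∈ Set.Icc α β, |iteratedDeriv (k + 1) f τ| ≤ M (k + 1))
    (s t : ℝ) (hs : s ∈ Set.Icc α β) (ht : t ∈ Set.Icc α β) (hst : s ≤ t)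
    (a : ℕ → ℝ) (hamem : ∀ l, j ≤ l → l ≤ k → a l ∈ Set.Icc s t)
    (hanti : ∀ l l', j ≤ l → l ≤ l' → l' ≤ k → a l' ≤ a l)
    (hasmall : ∀ l, j ≤ l → l ≤ k →
      |iteratedDeriv l f (a l)| / (Real.exp 1 ^ l * M l) ≤ Real.exp (-(k + 1 : ℝ)))
    (hjt : Real.exp (-(k : ℝ)) ≤ |iteratedDeriv j f t| / (Real.exp 1 ^ j * M j)) :
    1 < Real.exp 1 * μ (k + 1) * (t - s) := by
  classical
  have he : (0:ℝ) < Real.exp 1 := Real.exp_pos 1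
  set g : ℕ → ℝ → ℝ := fun l τ => |iteratedDeriv l f τ| / (Real.exp 1 ^ l * M l) with hg
  have hD : ∀ l : ℕ, (0:ℝ) < Real.exp 1 ^ l * M l := fun l =>
    mul_pos (pow_pos he l) (Mpos l)
  set X : ℝ := Real.exp 1 * μ (k + 1) with hX
  have hXpos : 0 < X := mul_pos he (μpos _ (by omega))
  have hsub : Set.Icc s t ⊆ Set.Icc α β := Set.Icc_subset_Icc hs.1 ht.2
  have gcont : ∀ l ≤ k + 1, ContinuousOn (g l) (Set.Icc α β) := by
    intro l hl
    exact ((hcont l hl).abs).div_const _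
  have gnn : ∀ l τ, 0 ≤ g l τ := by
    intro l τ
    exact div_nonneg (abs_nonneg _) (hD l).le
  have gk1 : ∀ τ ∈ Set.Icc α β, g (k + 1) τ ≤ Real.exp (-(k + 1 : ℝ)) := by
    intro τ hτ
    rw [hg]
    simp only
    rw [div_le_iff₀ (hD (k + 1))]
    have hexp : Real.exp (-(k + 1 : ℝ)) * (Real.exp 1 ^ (k + 1) * M (k + 1)) = M (k + 1) := by
      rw [Real.exp_one_pow, ← mul_assoc, ← Real.exp_add]
      push_cast
      rw [show -((k:ℝ)+1) + ((k:ℝ)+1) = 0 by ring, Real.exp_zero, one_mul]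
    rw [hexp]
    exact hcap τ hτ
  -- the basic one-step integral inequality
  have Gstep : ∀ l, j ≤ l → l ≤ k → ∀ a' τ', a' ∈ Set.Icc α β → τ' ∈ Set.Icc α β → a' ≤ τ' →
      g l τ' ≤ g l a' + X * ∫ u in a'..τ', g (l + 1) u := by
    intro l hjl hlk a' τ' ha' hτ' haτ
    have hIcc : Set.Icc a' τ' ⊆ Set.Icc α β := Set.Icc_subset_Icc ha'.1 hτ'.2
    have hderivs : ∀ u ∈ Set.uIcc a' τ',
        HasDerivAt (iteratedDeriv l f) (iteratedDeriv (l + 1) f u) u := by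
      intro u hu
      rw [Set.uIcc_of_le haτ] at hu
      exact hderiv l hlk u (hIcc hu)
    have hcont' : ContinuousOn (iteratedDeriv (l + 1) f) (Set.uIcc a' τ') := by
      apply (hcont (l + 1) (by omega)).mono
      rw [Set.uIcc_of_le haτ]
      exact hIcc
    have hint : IntervalIntegrable (iteratedDeriv (l + 1) f) MeasureTheory.volume a' τ' :=
      hcont'.intervalIntegrable
    have hftc := intervalIntegral.integral_eq_sub_of_hasDerivAt hderivs hint
    have habs : |iteratedDeriv l f τ'| ≤ |iteratedDeriv l f a'|
        + ∫ u in a'..τ', |iteratedDeriv (l + 1) f u| := by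
      have h2 : iteratedDeriv l f τ' = iteratedDeriv l f a'
          + ∫ u in a'..τ', iteratedDeriv (l + 1) f u := by
        rw [hftc]; ring
      rw [h2]
      refine (abs_add_le _ _).trans ?_
      gcongr
      exact intervalIntegral.abs_integral_le_integral_abs haτ
    -- rewrite the integral of |f^(l+1)| in terms of g (l+1)
    have hrw : (∫ u in a'..τ', |iteratedDeriv (l + 1) f u|)
        = (Real.exp 1 ^ (l + 1) * M (l + 1)) * ∫ u in a'..τ', g (l + 1) u := by
      rw [← intervalIntegral.integral_const_mul]
      apply intervalIntegral.integral_congr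
      intro u _
      rw [hg]
      simp only
      rw [mul_comm, div_mul_cancel₀ _ (hD (l+1)).ne']
    have hginto : 0 ≤ ∫ u in a'..τ', g (l + 1) u := by
      apply intervalIntegral.integral_nonneg haτ
      intro u _
      exact gnn _ _
    have hDrel : Real.exp 1 ^ (l + 1) * M (l + 1)
        = (Real.exp 1 ^ l * M l) * (Real.exp 1 * μ (l + 1)) := by
      rw [hMrec l, pow_succ]
      ring
    have hfinal : g l τ' ≤ g l a'
        + (Real.exp 1 * μ (l + 1)) * ∫ u in a'..τ', g (l + 1) u := by
      rw [hg]
      simp only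
      rw [div_le_iff₀ (hD l)]
      calc |iteratedDeriv l f τ'| ≤ |iteratedDeriv l f a'|
          + ∫ u in a'..τ', |iteratedDeriv (l + 1) f u| := habs
        _ = |iteratedDeriv l f a'| + (Real.exp 1 ^ (l + 1) * M (l + 1))
            * ∫ u in a'..τ', g (l + 1) u := by rw [hrw]
        _ = (|iteratedDeriv l f a'| / (Real.exp 1 ^ l * M l)
            + (Real.exp 1 * μ (l + 1)) * ∫ u in a'..τ', g (l + 1) u)
            * (Real.exp 1 ^ l * M l) := by
          rw [hDrel, add_mul, div_mul_cancel₀ _ (hD l).ne']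
          ring
    refine hfinal.trans ?_
    have : (Real.exp 1 * μ (l + 1)) * ∫ u in a'..τ', g (l + 1) u
        ≤ X * ∫ u in a'..τ', g (l + 1) u := by
      apply mul_le_mul_of_nonneg_right _ hginto
      rw [hX]
      have := μmono (l + 1) (k + 1) (by omega) (by omega)
      nlinarith
    linarith
  -- the anchors
  set A : ℕ → ℝ := fun d => if d = 0 then s else a (k + 1 - d) with hA
  have hAmem : ∀ d ≤ k + 1 - j, A d ∈ Set.Icc s t := by
    intro d hd
    rw [hA]
    by_cases h0 : d = 0
    · simp [h0, hst]
    · simp only [h0, if_false]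
      exact hamem _ (by omega) (by omega)
  -- main induction
  have Q : ∀ d, d ≤ k + 1 - j → ∀ τ ∈ Set.Icc (A d) t,
      g (k + 1 - d) τ ≤ Real.exp (-(k + 1 : ℝ)) * Efun d (X * (τ - s)) := by
    intro d
    induction d with
    | zero =>
      intro _ τ hτ
      have hτs : τ ∈ Set.Icc s t := by
        refine ⟨le_trans ?_ hτ.1, hτ.2⟩
        rw [hA]; simp
      have : Efun 0 (X * (τ - s)) = 1 := by
        unfold Efun; simp
      rw [this, mul_one]
      simpa using gk1 τ (hsub hτs)
    | succ d ih =>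
      intro hd τ hτ
      set l := k - d with hl
      have hld : k + 1 - (d + 1) = l := by omega
      have hjl : j ≤ l := by omega
      have hlk : l ≤ k := by omega
      have hAd1 : A (d + 1) = a l := by
        rw [hA]; simp only [Nat.succ_ne_zero, if_false, hld]
      have halmem : a l ∈ Set.Icc s t := hamem l hjl hlk
      have hτst : τ ∈ Set.Icc s t := by
        constructor
        · exact le_trans halmem.1 (hAd1 ▸ hτ.1)
        · exact hτ.2
      have hAd_le : A d ≤ a l := by
        by_cases h0 : d = 0
        · rw [hA]; simp [h0]; exact halmem.1
        · have : A d = a (l + 1) := by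
            rw [hA]; simp only [h0, if_false]; congr 1; omega
          rw [this]
          exact hanti l (l + 1) hjl (by omega) (by omega)
      have halτ : a l ≤ τ := hAd1 ▸ hτ.1
      -- step inequality
      have hstep := Gstep l hjl hlk (a l) τ (hsub halmem) (hsub hτst) halτ
      -- bound the integrand by the inductive hypothesis
      have hbound : ∀ u ∈ Set.Icc (a l) τ,
          g (l + 1) u ≤ Real.exp (-(k + 1 : ℝ)) * Efun d (X * (u - s)) := by
        intro u hu
        have hu' : u ∈ Set.Icc (A d) t :=
          ⟨le_trans hAd_le hu.1, le_trans hu.2 hτ.2⟩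
        have := ih (by omega) u hu'
        have hidx : k + 1 - d = l + 1 := by omega
        rwa [hidx] at this
      have hgint : IntervalIntegrable (g (l + 1)) MeasureTheory.volume (a l) τ := by
        apply ContinuousOn.intervalIntegrable
        apply (gcont (l + 1) (by omega)).mono
        rw [Set.uIcc_of_le halτ]
        exact fun u hu => hsub ⟨le_trans halmem.1 hu.1, le_trans hu.2 hτst.2⟩
      have hEint : ∀ s' t' : ℝ, IntervalIntegrable
          (fun u => Real.exp (-(k + 1 : ℝ)) * Efun d (X * (u - s))) MeasureTheory.volume s' t' :=
        fun s' t' => (Continuous.intervalIntegrable (by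
          exact continuous_const.mul (Efun_cont d X s)) _ _)
      have hmono := intervalIntegral.integral_mono_on halτ hgint (hEint (a l) τ) hbound
      have hsplit : (∫ u in s..τ, Real.exp (-(k + 1 : ℝ)) * Efun d (X * (u - s)))
          = (∫ u in s..(a l), Real.exp (-(k + 1 : ℝ)) * Efun d (X * (u - s)))
          + ∫ u in (a l)..τ, Real.exp (-(k + 1 : ℝ)) * Efun d (X * (u - s)) :=
        (intervalIntegral.integral_add_adjacent_intervals (hEint s (a l)) (hEint (a l) τ)).symm
      have hfirst : 0 ≤ ∫ u in s..(a l), Real.exp (-(k + 1 : ℝ)) * Efun d (X * (u - s)) := by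
        apply intervalIntegral.integral_nonneg halmem.1
        intro u hu
        have : 0 ≤ X * (u - s) := mul_nonneg hXpos.le (by linarith [hu.1])
        exact mul_nonneg (Real.exp_pos _).le (Efun_nonneg d this)
      have hext : (∫ u in (a l)..τ, Real.exp (-(k + 1 : ℝ)) * Efun d (X * (u - s)))
          ≤ ∫ u in s..τ, Real.exp (-(k + 1 : ℝ)) * Efun d (X * (u - s)) := by
        rw [hsplit]; linarith
      -- compute the full integral by FTC
      have hftc2 : (∫ u in s..τ, X * Efun d (X * (u - s)))
          = Efun (d + 1) (X * (τ - s)) - 1 := by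
        have hder : ∀ u ∈ Set.uIcc s τ, HasDerivAt (fun v => Efun (d + 1) (X * (v - s)))
            (X * Efun d (X * (u - s))) u := fun u _ => Efun_hasDerivAt d X s u
        rw [intervalIntegral.integral_eq_sub_of_hasDerivAt hder
          ((continuous_const.mul (Efun_cont d X s)).intervalIntegrable _ _)]
        simp [Efun_zero]
      have hXE : (∫ u in s..τ, Real.exp (-(k + 1 : ℝ)) * Efun d (X * (u - s)))
          = (Real.exp (-(k + 1 : ℝ)) / X) * (Efun (d + 1) (X * (τ - s)) - 1) := by
        rw [← hftc2, ← intervalIntegral.integral_const_mul]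
        apply intervalIntegral.integral_congr
        intro u _
        simp only
        rw [← mul_assoc, div_mul_cancel₀ _ hXpos.ne']
      have hasm := hasmall l hjl hlk
      have hgal : g l (a l) ≤ Real.exp (-(k + 1 : ℝ)) := hasm
      rw [hld]
      calc g l τ ≤ g l (a l) + X * ∫ u in (a l)..τ, g (l + 1) u := hstep
        _ ≤ Real.exp (-(k + 1 : ℝ))
            + X * ((Real.exp (-(k + 1 : ℝ)) / X) * (Efun (d + 1) (X * (τ - s)) - 1)) := by
          have h1 : X * (∫ u in (a l)..τ, g (l + 1) u)
              ≤ X * ((Real.exp (-(k + 1 : ℝ)) / X) * (Efun (d + 1) (X * (τ - s)) - 1)) := by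
            apply mul_le_mul_of_nonneg_left _ hXpos.le
            rw [← hXE]
            exact le_trans hmono hext
          linarith
        _ = Real.exp (-(k + 1 : ℝ)) * Efun (d + 1) (X * (τ - s)) := by
          field_simp
          ring
  -- conclude
  have hd0 : 1 ≤ k + 1 - j := by omega
  have hidx : k + 1 - (k + 1 - j) = j := by omega
  have hAfin : A (k + 1 - j) ≤ t := (hAmem _ (le_refl _)).2
  have hQ := Q (k + 1 - j) (le_refl _) t ⟨hAfin, le_refl t⟩
  rw [hidx] at hQ
  have hgjt : Real.exp (-(k : ℝ)) ≤ g j t := hjt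
  by_contra hcon
  push_neg at hcon
  have hXts : 0 ≤ X * (t - s) := mul_nonneg hXpos.le (by linarith)
  have hE1 : Efun (k + 1 - j) (X * (t - s)) ≤ Efun (k + 1 - j) 1 :=
    Efun_mono _ hXts (by rw [hX] at hcon ⊢; linarith)
  have hElt : Efun (k + 1 - j) 1 < Real.exp 1 := Efun_lt_exp_one _
  have : Real.exp (-(k : ℝ)) < Real.exp (-(k + 1 : ℝ)) * Real.exp 1 := by
    calc Real.exp (-(k : ℝ)) ≤ g j t := hgjt
      _ ≤ Real.exp (-(k + 1 : ℝ)) * Efun (k + 1 - j) (X * (t - s)) := hQ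
      _ ≤ Real.exp (-(k + 1 : ℝ)) * Efun (k + 1 - j) 1 := by
        apply mul_le_mul_of_nonneg_left _ (Real.exp_pos _).le
        exact hE1
      _ < Real.exp (-(k + 1 : ℝ)) * Real.exp 1 := by
        apply mul_lt_mul_of_pos_left hElt (Real.exp_pos _)
  rw [← Real.exp_add] at this
  have : (-(k : ℝ)) < (-(k + 1 : ℝ) + 1) := Real.exp_lt_exp.mp this
  linarith

lemma rolleStep (f : ℝ → ℝ) (α β : ℝ) (N : ℕ)
    (hcont : ∀ l ≤ N, ContinuousOn (iteratedDeriv l f) (Set.Icc α β))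
    (hderiv : ∀ l < N, ∀ τ ∈ Set.Icc α β,
      HasDerivAt (iteratedDeriv l f) (iteratedDeriv (l + 1) f τ) τ)
    (p r : ℕ) (hr : 1 ≤ r) (hpr : p + r ≤ N)
    (ζ : ℕ → ℝ)
    (hmono : ∀ i i', 1 ≤ i → i ≤ i' → i' ≤ r + 1 → ζ i ≤ ζ i')
    (hmem : ∀ i, 1 ≤ i → i ≤ r + 1 → ζ i ∈ Set.Icc α β)
    (hmult : ∀ i, 1 ≤ i → i ≤ r + 1 →
      ∀ l < ((Finset.Icc 1 (r + 1)).filter (fun i' => ζ i' = ζ i)).card,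
        iteratedDeriv (p + l) f (ζ i) = 0) :
    ∃ ζ' : ℕ → ℝ,
      (∀ i i', 1 ≤ i → i ≤ i' → i' ≤ r → ζ' i ≤ ζ' i') ∧
      (∀ i, 1 ≤ i → i ≤ r → ζ' i ∈ Set.Icc α β) ∧
      (∀ i, 1 ≤ i → i ≤ r →
        ∀ l < ((Finset.Icc 1 r).filter (fun i' => ζ' i' = ζ' i)).card,
          iteratedDeriv (p + 1 + l) f (ζ' i) = 0) ∧
      ζ' r ≤ ζ (r + 1) := by
  classical
  have hcount : ∀ i, 1 ≤ i → i ≤ r + 1 → iteratedDeriv p f (ζ i) = 0 := by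
    intro i h1 h2
    have hi : i ∈ (Finset.Icc 1 (r + 1)).filter (fun i' => ζ i' = ζ i) := by
      simp only [Finset.mem_filter, Finset.mem_Icc]
      exact ⟨⟨h1, h2⟩, trivial⟩
    have hpos : 0 < ((Finset.Icc 1 (r + 1)).filter (fun i' => ζ i' = ζ i)).card :=
      Finset.card_pos.mpr ⟨i, hi⟩
    simpa using hmult i h1 h2 0 hpos
  set C : ℕ → Prop := fun i => ∃ c ∈ Set.Ioo (ζ i) (ζ (i + 1)),
      iteratedDeriv (p + 1) f c = 0 with hC
  set ζ' : ℕ → ℝ := fun i => if h : C i then h.choose else ζ i with hζ'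
  have hchoose : ∀ i, (h : C i) → ζ' i ∈ Set.Ioo (ζ i) (ζ (i + 1))
      ∧ iteratedDeriv (p + 1) f (ζ' i) = 0 := by
    intro i h
    have : ζ' i = h.choose := by rw [hζ']; simp only [dif_pos h]
    rw [this]
    exact ⟨h.choose_spec.1, h.choose_spec.2⟩
  have hcopy : ∀ i, (¬ C i) → ζ' i = ζ i := by
    intro i h
    rw [hζ']; simp only [dif_neg h]
  have hlow : ∀ i, ζ i ≤ ζ' i := by
    intro i
    by_cases h : C i
    · exact ((hchoose i h).1.1).le
    · rw [hcopy i h]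
  have hhigh : ∀ i, 1 ≤ i → i ≤ r → ζ' i ≤ ζ (i + 1) := by
    intro i h1 h2
    by_cases h : C i
    · exact ((hchoose i h).1.2).le
    · rw [hcopy i h]; exact hmono i (i + 1) h1 (by omega) (by omega)
  have hCiff : ∀ i, 1 ≤ i → i ≤ r → (C i ↔ ζ i < ζ (i + 1)) := by
    intro i h1 h2
    constructor
    · rintro ⟨c, hc, -⟩; exact lt_trans hc.1 hc.2
    · intro hlt
      have hmemi := hmem i h1 (by omega)
      have hmemi1 := hmem (i + 1) (by omega) (by omega)
      have hC1 : ContinuousOn (iteratedDeriv p f) (Set.Icc (ζ i) (ζ (i + 1))) :=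
        (hcont p (by omega)).mono (Set.Icc_subset_Icc hmemi.1 hmemi1.2)
      have hDrv : ∀ u ∈ Set.Ioo (ζ i) (ζ (i + 1)),
          HasDerivAt (iteratedDeriv p f) (iteratedDeriv (p + 1) f u) u := by
        intro u hu
        exact hderiv p (by omega) u ⟨le_trans hmemi.1 hu.1.le, le_trans hu.2.le hmemi1.2⟩
      have heq : iteratedDeriv p f (ζ i) = iteratedDeriv p f (ζ (i + 1)) := by
        rw [hcount i h1 (by omega), hcount (i + 1) (by omega) (by omega)]
      exact exists_hasDerivAt_eq_zero hlt hC1 heq hDrv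
  refine ⟨ζ', ?_, ?_, ?_, hhigh r hr (le_refl r)⟩
  · -- monotone
    intro i i' h1 hii' h2
    rcases eq_or_lt_of_le hii' with h | h
    · rw [h]
    · calc ζ' i ≤ ζ (i + 1) := hhigh i h1 (by omega)
        _ ≤ ζ i' := hmono (i + 1) i' (by omega) (by omega) (by omega)
        _ ≤ ζ' i' := hlow i'
  · -- membership
    intro i h1 h2
    exact ⟨le_trans (hmem i h1 (by omega)).1 (hlow i),
      le_trans (hhigh i h1 h2) (hmem (i + 1) (by omega) (by omega)).2⟩
  · -- multiplicities
    intro i h1 h2 l hl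
    by_cases hCi : C i
    · -- Rolle point: unique in the list
      have hsingle : (Finset.Icc 1 r).filter (fun i' => ζ' i' = ζ' i) = {i} := by
        apply Finset.eq_singleton_iff_unique_mem.mpr
        constructor
        · simp only [Finset.mem_filter, Finset.mem_Icc]
          exact ⟨⟨h1, h2⟩, trivial⟩
        · intro i'' hi''
          simp only [Finset.mem_filter, Finset.mem_Icc] at hi''
          obtain ⟨⟨h1'', h2''⟩, heq''⟩ := hi''
          by_contra hne
          rcases lt_or_gt_of_ne hne with hlt | hgt
          · have : ζ' i'' ≤ ζ i := le_trans (hhigh i'' h1'' (by omega))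
              (hmono (i'' + 1) i (by omega) (by omega) (by omega))
            have h2' : ζ i < ζ' i := (hchoose i hCi).1.1
            linarith [heq'' ▸ this]
          · have : ζ (i + 1) ≤ ζ' i'' := le_trans
              (hmono (i + 1) i'' (by omega) (by omega) (by omega)) (hlow i'')
            have h2' : ζ' i < ζ (i + 1) := (hchoose i hCi).1.2
            linarith [heq'' ▸ this]
      rw [hsingle, Finset.card_singleton] at hl
      interval_cases l
      simpa using (hchoose i hCi).2
    · -- copied point
      have hvi : ζ' i = ζ i := hcopy i hCi
      have heqnext : ζ i = ζ (i + 1) := by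
        have hnlt : ¬ ζ i < ζ (i + 1) := fun hlt => hCi ((hCiff i h1 h2).mpr hlt)
        have := hmono i (i + 1) h1 (by omega) (by omega)
        linarith [lt_or_eq_of_le this |>.resolve_left hnlt]
      set S := (Finset.Icc 1 (r + 1)).filter (fun i' => ζ i' = ζ i) with hS
      have hiS : i ∈ S := by
        rw [hS]; simp only [Finset.mem_filter, Finset.mem_Icc]; exact ⟨⟨h1, by omega⟩, trivial⟩
      have hSne : S.Nonempty := ⟨i, hiS⟩
      set b := S.max' hSne with hb
      have hbS : b ∈ S := S.max'_mem hSne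
      have hNEWsub : (Finset.Icc 1 r).filter (fun i' => ζ' i' = ζ' i) ⊆ S.erase b := by
        intro i'' hi''
        simp only [Finset.mem_filter, Finset.mem_Icc] at hi''
        obtain ⟨⟨h1'', h2''⟩, heq''⟩ := hi''
        have hCopy'' : ¬ C i'' := by
          intro hC''
          have hIoo := (hchoose i'' hC'').1
          rcases le_or_gt i i'' with hle | hgt
          · have : ζ i ≤ ζ i'' := hmono i i'' h1 hle (by omega)
            have : ζ i < ζ' i'' := lt_of_le_of_lt this hIoo.1
            rw [heq'', hvi] at this
            exact lt_irrefl _ this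
          · have : ζ (i'' + 1) ≤ ζ i := hmono (i'' + 1) i (by omega) (by omega) (by omega)
            have : ζ' i'' < ζ i := lt_of_lt_of_le hIoo.2 this
            rw [heq'', hvi] at this
            exact lt_irrefl _ this
        have hv'' : ζ i'' = ζ i := by
          rw [← hcopy i'' hCopy'', heq'', hvi]
        have heqnext'' : ζ (i'' + 1) = ζ i := by
          have hnlt : ¬ ζ i'' < ζ (i'' + 1) := fun hlt => hCopy'' ((hCiff i'' h1'' h2'').mpr hlt)
          have := hmono i'' (i'' + 1) h1'' (by omega) (by omega)
          have heq2 : ζ i'' = ζ (i'' + 1) := by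
            rcases lt_or_eq_of_le this with h | h
            · exact absurd h hnlt
            · exact h
          rw [← heq2, hv'']
        have hi''S : i'' ∈ S := by
          rw [hS]; simp only [Finset.mem_filter, Finset.mem_Icc]
          exact ⟨⟨h1'', by omega⟩, hv''⟩
        have hi''1S : i'' + 1 ∈ S := by
          rw [hS]; simp only [Finset.mem_filter, Finset.mem_Icc]
          exact ⟨⟨by omega, by omega⟩, heqnext''⟩
        have : i'' + 1 ≤ b := S.le_max' _ hi''1S
        exact Finset.mem_erase.mpr ⟨by omega, hi''S⟩
      have hScard : 1 ≤ S.card := Finset.card_pos.mpr hSne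
      have hcard : ((Finset.Icc 1 r).filter (fun i' => ζ' i' = ζ' i)).card ≤ S.card - 1 := by
        have := Finset.card_le_card hNEWsub
        rwa [Finset.card_erase_of_mem hbS] at this
      have hl' : l + 1 < S.card := by omega
      have := hmult i h1 (by omega) (l + 1) hl'
      rw [hvi, show p + 1 + l = p + (l + 1) by omega]
      exact this

lemma rolleSys (f : ℝ → ℝ) (α β : ℝ) (N : ℕ)
    (hcont : ∀ l ≤ N, ContinuousOn (iteratedDeriv l f) (Set.Icc α β))
    (hderiv : ∀ l < N, ∀ τ ∈ Set.Icc α β,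
      HasDerivAt (iteratedDeriv l f) (iteratedDeriv (l + 1) f τ) τ) :
    ∀ r p, 1 ≤ r → p + r ≤ N + 1 → ∀ ζ : ℕ → ℝ,
    (∀ i i', 1 ≤ i → i ≤ i' → i' ≤ r → ζ i ≤ ζ i') →
    (∀ i, 1 ≤ i → i ≤ r → ζ i ∈ Set.Icc α β) →
    (∀ i, 1 ≤ i → i ≤ r →
      ∀ l < ((Finset.Icc 1 r).filter (fun i' => ζ i' = ζ i)).card,
        iteratedDeriv (p + l) f (ζ i) = 0) →
    ∃ Y : ℕ → ℝ,
      (∀ q q', q ≤ q' → q' ≤ r - 1 → Y q' ≤ Y q) ∧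
      (∀ q ≤ r - 1, Y q ∈ Set.Icc α β) ∧
      (∀ q ≤ r - 1, Y q ≤ ζ r) ∧
      (∀ q ≤ r - 1, iteratedDeriv (p + q) f (Y q) = 0) := by
  intro r
  induction r with
  | zero => intro p h; omega
  | succ r ih =>
    intro p hr1 hpr ζ hmono hmem hmult
    have hcount : ∀ i, 1 ≤ i → i ≤ r + 1 → iteratedDeriv p f (ζ i) = 0 := by
      intro i h1 h2
      have hi : i ∈ (Finset.Icc 1 (r + 1)).filter (fun i' => ζ i' = ζ i) := by
        simp only [Finset.mem_filter, Finset.mem_Icc]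
        exact ⟨⟨h1, h2⟩, trivial⟩
      have hpos : 0 < ((Finset.Icc 1 (r + 1)).filter (fun i' => ζ i' = ζ i)).card :=
        Finset.card_pos.mpr ⟨i, hi⟩
      simpa using hmult i h1 h2 0 hpos
    by_cases hr0 : r = 0
    · subst hr0
      refine ⟨fun _ => ζ 1, ?_, ?_, ?_, ?_⟩
      · intro q q' _ _; exact le_refl _
      · intro q hq; exact hmem 1 (le_refl _) (by omega)
      · intro q hq; exact hmono 1 1 (le_refl _) (le_refl _) (by omega)
      · intro q hq
        have : q = 0 := by omega
        subst this
        simpa using hcount 1 (le_refl _) (by omega)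
    · obtain ⟨ζ', hmono', hmem', hmult', htop⟩ :=
        rolleStep f α β N hcont hderiv p r (by omega) (by omega) ζ hmono hmem hmult
      obtain ⟨Y', hanti', hmem'', htop'', hzero''⟩ :=
        ih (p + 1) (by omega) (by omega) ζ' hmono' hmem' hmult'
      refine ⟨fun q => if q = 0 then ζ (r + 1) else Y' (q - 1), ?_, ?_, ?_, ?_⟩
      · intro q q' hqq' hq'
        by_cases hq0 : q' = 0
        · subst hq0
          have : q = 0 := by omega
          subst this
          simp
        · simp only [hq0, if_false]
          by_cases hq00 : q = 0
          · subst hq00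
            simp only [if_true]
            calc Y' (q' - 1) ≤ ζ' r := htop'' (q' - 1) (by omega)
              _ ≤ ζ (r + 1) := htop
          · simp only [hq00, if_false]
            exact hanti' (q - 1) (q' - 1) (by omega) (by omega)
      · intro q hq
        by_cases hq0 : q = 0
        · subst hq0; simp only [if_true]; exact hmem (r + 1) (by omega) (le_refl _)
        · simp only [hq0, if_false]
          exact hmem'' (q - 1) (by omega)
      · intro q hq
        by_cases hq0 : q = 0
        · subst hq0; simp
        · simp only [hq0, if_false]
          calc Y' (q - 1) ≤ ζ' r := htop'' (q - 1) (by omega)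
            _ ≤ ζ (r + 1) := htop
      · intro q hq
        by_cases hq0 : q = 0
        · subst hq0
          simpa using hcount (r + 1) (by omega) (le_refl _)
        · simp only [hq0, if_false]
          have := hzero'' (q - 1) (by omega)
          rwa [show p + 1 + (q - 1) = p + q by omega] at this

lemma iteratedDerivWithin_isOpen_eq {U : Set ℝ} (hU : IsOpen U) (f : ℝ → ℝ) (n : ℕ)
    {τ : ℝ} (hτ : τ ∈ U) : iteratedDerivWithin n f U τ = iteratedDeriv n f τ := by
  rw [iteratedDerivWithin_eq_iteratedFDerivWithin, iteratedDeriv_eq_iteratedFDeriv,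
    iteratedFDerivWithin_of_isOpen n hU hτ]

lemma contOn_iteratedDeriv {U : Set ℝ} (hU : IsOpen U) {x y : ℝ} (hsub : Set.Icc x y ⊆ U)
    {f : ℝ → ℝ} {N : ℕ} (hfU : ContDiffOn ℝ (N : ℕ∞) f U) {n : ℕ} (hn : n ≤ N) :
    ContinuousOn (iteratedDeriv n f) (Set.Icc x y) := by
  have h1 : ContinuousOn (iteratedDerivWithin n f U) U :=
    hfU.continuousOn_iteratedDerivWithin (by exact_mod_cast hn) hU.uniqueDiffOn
  have h2 : ContinuousOn (iteratedDeriv n f) U :=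
    h1.congr fun τ hτ => (iteratedDerivWithin_isOpen_eq hU f n hτ).symm
  exact h2.mono hsub

lemma hasDerivAt_iteratedDeriv {U : Set ℝ} (hU : IsOpen U) {x y : ℝ} (hsub : Set.Icc x y ⊆ U)
    {f : ℝ → ℝ} {N : ℕ} (hfU : ContDiffOn ℝ (N : ℕ∞) f U) {n : ℕ} (hn : n < N)
    {τ : ℝ} (hτ : τ ∈ Set.Icc x y) :
    HasDerivAt (iteratedDeriv n f) (iteratedDeriv (n + 1) f τ) τ := by
  have hτU : τ ∈ U := hsub hτ
  have hdiff : DifferentiableOn ℝ (iteratedDerivWithin n f U) U :=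
    hfU.differentiableOn_iteratedDerivWithin (by exact_mod_cast hn) hU.uniqueDiffOn
  have h1 : HasDerivWithinAt (iteratedDerivWithin n f U)
      (derivWithin (iteratedDerivWithin n f U) U τ) U τ :=
    (hdiff τ hτU).hasDerivWithinAt
  have h2 : HasDerivAt (iteratedDerivWithin n f U)
      (derivWithin (iteratedDerivWithin n f U) U τ) τ :=
    h1.hasDerivAt (hU.mem_nhds hτU)
  have hval : derivWithin (iteratedDerivWithin n f U) U τ = iteratedDeriv (n + 1) f τ := by
    rw [← iteratedDerivWithin_succ,
      iteratedDerivWithin_isOpen_eq hU f (n + 1) hτU]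
  rw [hval] at h2
  apply h2.congr_of_eventuallyEq
  filter_upwards [hU.mem_nhds hτU] with u hu
  exact (iteratedDerivWithin_isOpen_eq hU f n hu).symm

set_option maxHeartbeats 1000000 in
lemma core (μ M : ℕ → ℝ)
    (hμpos : ∀ j, 1 ≤ j → 0 < μ j)
    (hμmono : ∀ j, 1 ≤ j → μ j ≤ μ (j + 1))
    (hM0 : 0 < M 0)
    (hMrec : ∀ j, M (j + 1) = M j * μ (j + 1))
    (x y : ℝ) (hxy : x < y)
    (N : ℕ) (hN : 1 ≤ N)
    (f : ℝ → ℝ)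
    (hf : ∃ U : Set ℝ, IsOpen U ∧ Set.Icc x y ⊆ U ∧ ContDiffOn ℝ (N : ℕ∞) f U)
    (hbd : ∀ j ≤ N, ∀ t ∈ Set.Icc x y, |iteratedDeriv j f t| ≤ M j)
    (m : ℕ) (hm1 : 1 ≤ m) (hmN : m ≤ N)
    (z : ℕ → ℝ)
    (hzmem : ∀ i, 1 ≤ i → i ≤ m → z i ∈ Set.Icc x y)
    (hzmono : ∀ i j, 1 ≤ i → i ≤ j → j ≤ m → z i ≤ z j)
    (hzmult : ∀ i, 1 ≤ i → i ≤ m →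
      ∀ l < ((Finset.Icc 1 m).filter (fun i' => z i' = z i)).card,
        iteratedDeriv l f (z i) = 0)
    (w : ℝ) (hw : w ∈ Set.Icc x y) (hwz : z m ≤ w)
    (hb0pos : 0 < bFun f M N 0 w) :
    (1 / Real.exp 1) * ∑ j ∈ Finset.Ioc (jZero (bFun f M N 0 w)) m, 1 / μ j < y - x := by
  classical
  obtain ⟨U, hUopen, hUsub, hfU⟩ := hf
  have he : (0:ℝ) < Real.exp 1 := Real.exp_pos 1
  have Mpos : ∀ i, 0 < M i := by
    intro i
    induction i with
    | zero => exact hM0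
    | succ i ih => rw [hMrec]; exact mul_pos ih (hμpos _ (by omega))
  have μmono' : ∀ i i', 1 ≤ i → i ≤ i' → μ i ≤ μ i' := by
    intro i i' h1 h2
    induction i' with
    | zero => exact absurd h2 (by omega)
    | succ i'' ih =>
      rcases eq_or_lt_of_le h2 with h | h
      · rw [h]
      · exact le_trans (ih (by omega)) (hμmono i'' (by omega))
  have hcont : ∀ l ≤ N, ContinuousOn (iteratedDeriv l f) (Set.Icc x y) :=
    fun l hl => contOn_iteratedDeriv hUopen hUsub hfU hl
  have hderivA : ∀ l < N, ∀ τ ∈ Set.Icc x y,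
      HasDerivAt (iteratedDeriv l f) (iteratedDeriv (l + 1) f τ) τ :=
    fun l hl τ hτ => hasDerivAt_iteratedDeriv hUopen hUsub hfU hl hτ
  set bb := bFun f M N 0 w with hbb
  set j0 := jZero bb with hj0
  -- basic facts about bb
  have hDl : ∀ l : ℕ, (0:ℝ) < Real.exp 1 ^ l * M l := fun l => mul_pos (pow_pos he l) (Mpos l)
  have himfin : ((fun j => |iteratedDeriv j f w| / (Real.exp 1 ^ j * M j)) '' Set.Icc 0 N).Finite :=
    (Set.finite_Icc _ _).image _
  have himne : ((fun j => |iteratedDeriv j f w| / (Real.exp 1 ^ j * M j)) '' Set.Icc 0 N).Nonempty :=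
    ⟨_, Set.mem_image_of_mem _ (Set.mem_Icc.mpr ⟨Nat.zero_le 0, Nat.zero_le N⟩)⟩
  have hbmem : bb ∈ (fun j => |iteratedDeriv j f w| / (Real.exp 1 ^ j * M j)) '' Set.Icc 0 N :=
    Set.Nonempty.csSup_mem himne himfin
  obtain ⟨jb, hjbIcc, hjbval⟩ := hbmem
  have hjbN : jb ≤ N := (Set.mem_Icc.mp hjbIcc).2
  have hbe : Real.exp (-(j0 : ℝ)) ≤ bb := by
    have hj0mem : Real.log (1 / bb) ≤ (j0 : ℝ) := by
      have hne : {j : ℕ | Real.log (1 / bb) ≤ (j : ℝ)}.Nonempty := by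
        obtain ⟨n, hn⟩ := exists_nat_ge (Real.log (1 / bb))
        exact ⟨n, hn⟩
      exact Nat.sInf_mem hne
    have h1 : 1 / bb ≤ Real.exp (j0 : ℝ) :=
      (Real.log_le_iff_le_exp (by positivity)).mp hj0mem
    rw [Real.exp_neg]
    rw [inv_le_comm₀ (Real.exp_pos _) hb0pos, inv_eq_one_div]
    exact h1
  -- the Rolle chain
  obtain ⟨Y, hYanti, hYmem, hYtop, hYzero'⟩ :=
    rolleSys f x y N hcont hderivA m 0 hm1 (by omega) z hzmono hzmem
      (by intro i h1 h2 l hl; rw [zero_add]; exact hzmult i h1 h2 l hl)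
  have hYzero : ∀ q ≤ m - 1, iteratedDeriv q f (Y q) = 0 := by
    intro q hq
    have := hYzero' q hq
    rwa [zero_add] at this
  -- the auxiliary function c
  set YY : ℕ → ℝ := fun l => if l ≤ m - 1 then Y l else x with hYY
  set G : ℕ → ℝ → ℝ := fun l τ => |iteratedDeriv l f τ| / (Real.exp 1 ^ l * M l) with hG
  have hrange0 : (Finset.range (N + 1)).Nonempty := ⟨0, Finset.mem_range.mpr (by omega)⟩
  set c : ℝ → ℝ := fun τ => (Finset.range (N + 1)).sup' hrange0 (fun l => G l (max τ (YY l)))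
    with hc
  have hYYmem : ∀ l, YY l ∈ Set.Icc x y := by
    intro l
    rw [hYY]
    by_cases h : l ≤ m - 1
    · simp only [h, if_true]; exact hYmem l h
    · simp only [h, if_false]; exact ⟨le_refl x, hxy.le⟩
  have hYYw : ∀ l, YY l ≤ w := by
    intro l
    rw [hYY]
    by_cases h : l ≤ m - 1
    · simp only [h, if_true]; exact le_trans (hYtop l h) hwz
    · simp only [h, if_false]; exact hw.1
  have hmax_mem : ∀ (l : ℕ), ∀ τ ∈ Set.Icc x y, max τ (YY l) ∈ Set.Icc x y :=
    fun l τ hτ => ⟨le_trans hτ.1 (le_max_left _ _), max_le hτ.2 (hYYmem l).2⟩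
  have hGcont : ∀ l ≤ N, ContinuousOn (G l) (Set.Icc x y) :=
    fun l hl => ((hcont l hl).abs).div_const _
  have hccont : ContinuousOn c (Set.Icc x y) := by
    apply continuousOn_sup'
    intro l hl
    have hlN : l ≤ N := by have := Finset.mem_range.mp hl; omega
    apply ContinuousOn.comp (hGcont l hlN) ((continuous_id.max continuous_const).continuousOn)
    intro τ hτ
    exact hmax_mem l τ hτ
  have hGcap : ∀ l ≤ N, ∀ τ ∈ Set.Icc x y, G l τ ≤ Real.exp (-(l : ℝ)) := by
    intro l hl τ hτ
    rw [hG]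
    simp only
    rw [div_le_iff₀ (hDl l)]
    have hexp : Real.exp (-(l : ℝ)) * (Real.exp 1 ^ l * M l) = M l := by
      rw [Real.exp_one_pow, ← mul_assoc, ← Real.exp_add]
      rw [show -(l:ℝ) + (l:ℝ) = 0 by ring, Real.exp_zero, one_mul]
    rw [hexp]
    exact hbd l hl τ hτ
  have hcle : ∀ τ, ∀ l ≤ N, G l (max τ (YY l)) ≤ c τ := by
    intro τ l hl
    have hmeml : l ∈ Finset.range (N + 1) := Finset.mem_range.mpr (by omega)
    exact Finset.le_sup' (fun l => G l (max τ (YY l))) hmeml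
  have hGzeroY : ∀ l ≤ m - 1, G l (Y l) = 0 := by
    intro l hl
    rw [hG]
    simp only
    rw [hYzero l hl]
    simp
  have hcw : Real.exp (-(j0 : ℝ)) ≤ c w := by
    have h2 := hcle w jb hjbN
    rw [max_eq_left (hYYw jb)] at h2
    have h3 : G jb w = bb := hjbval
    rw [h3] at h2
    exact le_trans hbe h2
  have hYm1w : Y (m - 1) ≤ w := le_trans (hYtop (m - 1) (le_refl _)) hwz
  have hYm1x : x ≤ Y (m - 1) := (hYmem (m - 1) (le_refl _)).1
  have hcym : c (Y (m - 1)) ≤ Real.exp (-(m : ℝ)) := by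
    apply Finset.sup'_le
    intro l hl
    have hlN : l ≤ N := by have := Finset.mem_range.mp hl; omega
    by_cases hlm : l ≤ m - 1
    · have hYl : Y (m - 1) ≤ Y l := hYanti l (m - 1) hlm (le_refl _)
      have h1 : max (Y (m - 1)) (YY l) = Y l := by
        rw [hYY]; simp only [hlm, if_true]; exact max_eq_right hYl
      rw [h1, hGzeroY l hlm]
      positivity
    · have h1 : max (Y (m - 1)) (YY l) = Y (m - 1) := by
        rw [hYY]; simp only [hlm, if_false]; exact max_eq_left hYm1x
      rw [h1]
      refine le_trans (hGcap l hlN _ (hYmem (m - 1) (le_refl _))) ?_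
      apply Real.exp_le_exp.mpr
      have : (m : ℝ) ≤ (l : ℝ) := by exact_mod_cast by omega
      linarith
  -- the step construction
  have step : ∀ k, k + 1 ≤ m → ∀ u, u ∈ Set.Icc (Y (m - 1)) w →
      Real.exp (-(k : ℝ)) ≤ c u →
      ∃ v, v ∈ Set.Icc (Y (m - 1)) u ∧ c v = Real.exp (-(k + 1 : ℝ)) ∧
        1 / (Real.exp 1 * μ (k + 1)) < u - v := by
    intro k hkm u hu hcu
    have hIccu : Set.Icc (Y (m - 1)) u ⊆ Set.Icc x y :=
      Set.Icc_subset_Icc hYm1x (le_trans hu.2 hw.2)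
    set A := Set.Icc (Y (m - 1)) u ∩ c ⁻¹' (Set.Iic (Real.exp (-(k + 1 : ℝ)))) with hA
    have hAmem : Y (m - 1) ∈ A := by
      constructor
      · exact ⟨le_refl _, hu.1⟩
      · refine le_trans hcym (Real.exp_le_exp.mpr ?_)
        have : (k : ℝ) + 1 ≤ (m : ℝ) := by exact_mod_cast hkm
        linarith
    have hAclosed : IsClosed A :=
      (hccont.mono hIccu).preimage_isClosed_of_isClosed isClosed_Icc isClosed_Iic
    have hAcp : IsCompact A := isCompact_Icc.of_isClosed_subset hAclosed Set.inter_subset_left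
    set v := sSup A with hv
    have hvA : v ∈ A := hAcp.sSup_mem ⟨_, hAmem⟩
    have hvY : Y (m - 1) ≤ v := hvA.1.1
    have hvu : v ≤ u := hvA.1.2
    have hcv_le : c v ≤ Real.exp (-(k + 1 : ℝ)) := hvA.2
    have hclt : Real.exp (-(k + 1 : ℝ)) < Real.exp (-(k : ℝ)) :=
      Real.exp_lt_exp.mpr (by linarith)
    have hIccvu : Set.Icc v u ⊆ Set.Icc x y :=
      Set.Icc_subset_Icc (le_trans hYm1x hvY) (le_trans hu.2 hw.2)
    obtain ⟨ρ, hρIcc, hρval⟩ := intermediate_value_Icc hvu (hccont.mono hIccvu)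
      ⟨hcv_le, le_trans hclt.le hcu⟩
    have hρA : ρ ∈ A := ⟨⟨le_trans hvY hρIcc.1, hρIcc.2⟩, le_of_eq hρval⟩
    have hρv : ρ ≤ v := le_csSup hAcp.bddAbove hρA
    have hveq : c v = Real.exp (-(k + 1 : ℝ)) := by
      have : ρ = v := le_antisymm hρv hρIcc.1
      rw [← this]; exact hρval
    -- the first crossing point σ
    set B := Set.Icc v u ∩ c ⁻¹' (Set.Ici (Real.exp (-(k : ℝ)))) with hB
    have hBmem : u ∈ B := ⟨⟨hvu, le_refl _⟩, hcu⟩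
    have hBclosed : IsClosed B :=
      (hccont.mono hIccvu).preimage_isClosed_of_isClosed isClosed_Icc isClosed_Ici
    have hBcp : IsCompact B := isCompact_Icc.of_isClosed_subset hBclosed Set.inter_subset_left
    set σ := sInf B with hσ
    have hσB : σ ∈ B := hBcp.sInf_mem ⟨_, hBmem⟩
    have hvσ : v ≤ σ := hσB.1.1
    have hσu : σ ≤ u := hσB.1.2
    have hcσ : Real.exp (-(k : ℝ)) ≤ c σ := hσB.2
    have hσIcc : σ ∈ Set.Icc x y := hIccvu ⟨hvσ, hσu⟩
    have hvIcc : v ∈ Set.Icc x y := hIccvu ⟨le_refl _, hvu⟩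
    -- the active index at σ
    obtain ⟨j, hjmem, hjval⟩ :=
      Finset.exists_mem_eq_sup' hrange0 (fun l => G l (max σ (YY l)))
    have hjN : j ≤ N := by have := Finset.mem_range.mp hjmem; omega
    have hjle : Real.exp (-(k : ℝ)) ≤ G j (max σ (YY j)) := by
      rw [← hjval]; exact hcσ
    have hjk : j ≤ k := by
      have h2 := le_trans hjle (hGcap j hjN _ (hmax_mem j σ hσIcc))
      have h3 := Real.exp_le_exp.mp h2
      have : (j : ℝ) ≤ (k : ℝ) := by linarith
      exact_mod_cast this
    have hjm : j ≤ m - 1 := by omega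
    have hYYj : YY j = Y j := by rw [hYY]; simp only [hjm, if_true]
    have hYjσ : Y j ≤ σ := by
      by_contra hgt
      push_neg at hgt
      have h1 : max σ (YY j) = Y j := by rw [hYYj]; exact max_eq_right hgt.le
      rw [h1, hGzeroY j hjm] at hjle
      linarith [Real.exp_pos (-(k : ℝ))]
    have hmaxσ : max σ (YY j) = σ := by rw [hYYj]; exact max_eq_left hYjσ
    -- apply the key lemma on [v, σ]
    have hkey := key f x y M μ Mpos hMrec hμpos μmono' k j hjk
      (fun l hl => hderivA l (by omega))
      (fun l hl => hcont l (by omega))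
      (hbd (k + 1) (by omega))
      v σ hvIcc hσIcc hvσ
      (fun l => max v (YY l))
      ?_ ?_ ?_ ?_
    · refine ⟨v, ⟨hvY, hvu⟩, hveq, ?_⟩
      have hEpos : (0:ℝ) < Real.exp 1 * μ (k + 1) := mul_pos he (hμpos _ (by omega))
      rw [div_lt_iff₀ hEpos]
      nlinarith
    · -- anchors in [v, σ]
      intro l hjl hlk
      constructor
      · exact le_max_left _ _
      · apply max_le hvσ
        have hlm : l ≤ m - 1 := by omega
        have h1 : YY l = Y l := by rw [hYY]; simp only [hlm, if_true]
        rw [h1]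
        exact le_trans (hYanti j l hjl hlm) hYjσ
    · -- anchors antitone
      intro l l' hjl hll' hl'k
      apply max_le_max (le_refl v)
      have hlm : l ≤ m - 1 := by omega
      have hl'm : l' ≤ m - 1 := by omega
      rw [hYY]; simp only [hlm, hl'm, if_true]
      exact hYanti l l' hll' hl'm
    · -- anchors small
      intro l hjl hlk
      have h1 := hcle v l (by omega)
      rw [hveq] at h1
      exact h1
    · -- value at σ
      rw [← hmaxσ]
      exact hjle
  -- the descending induction
  have main : ∀ d k, k + d + 1 = m → ∀ u, u ∈ Set.Icc (Y (m - 1)) w →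
      Real.exp (-(k : ℝ)) ≤ c u →
      ∑ κ ∈ Finset.Icc k (m - 1), 1 / (Real.exp 1 * μ (κ + 1)) < u - Y (m - 1) := by
    intro d
    induction d with
    | zero =>
      intro k hk u hu hcu
      obtain ⟨v, hvIcc, hveq, hlt⟩ := step k (by omega) u hu hcu
      have hkm : k = m - 1 := by omega
      rw [hkm, Finset.Icc_self, Finset.sum_singleton]
      rw [hkm] at hlt
      have := hvIcc.1
      linarith
    | succ d ih =>
      intro k hk u hu hcu
      obtain ⟨v, hvIcc, hveq, hlt⟩ := step k (by omega) u hu hcu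
      have hcv' : Real.exp (-((k + 1 : ℕ) : ℝ)) ≤ c v := by
        rw [hveq]
        apply le_of_eq
        congr 1
        push_cast
        ring
      have hIH := ih (k + 1) (by omega) v ⟨hvIcc.1, le_trans hvIcc.2 hu.2⟩ hcv'
      have hins : insert k (Finset.Icc (k + 1) (m - 1)) = Finset.Icc k (m - 1) := by
        ext a
        simp only [Finset.mem_insert, Finset.mem_Icc]
        omega
      rw [← hins, Finset.sum_insert (by simp only [Finset.mem_Icc]; omega)]
      linarith
  -- conclusion
  by_cases hcase : m ≤ j0
  · have hempty : Finset.Ioc j0 m = ∅ := Finset.Ioc_eq_empty (by omega)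
    rw [hempty]
    simpa using sub_pos.mpr hxy
  · have hfin := main (m - 1 - j0) j0 (by omega) w ⟨hYm1w, le_refl w⟩ hcw
    have hsum : (1 / Real.exp 1) * ∑ j ∈ Finset.Ioc j0 m, 1 / μ j
        = ∑ κ ∈ Finset.Icc j0 (m - 1), 1 / (Real.exp 1 * μ (κ + 1)) := by
      rw [Finset.mul_sum]
      refine Finset.sum_nbij' (i := fun j => j - 1) (j := fun κ => κ + 1)
        (hi := ?_) (hj := ?_) (left_neg := ?_) (right_neg := ?_) (h := ?_)
      · intro a ha
        simp only [Finset.mem_Ioc] at ha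
        simp only [Finset.mem_Icc]
        omega
      · intro a ha
        simp only [Finset.mem_Icc] at ha
        simp only [Finset.mem_Ioc]
        omega
      · intro a ha
        simp only [Finset.mem_Ioc] at ha
        show a - 1 + 1 = a
        omega
      · intro a _
        show a + 1 - 1 = a
        omega
      · intro a ha
        simp only [Finset.mem_Ioc] at ha
        rw [show a - 1 + 1 = a by omega]
        rw [div_mul_div_comm, one_mul]
    rw [hsum]
    have h1 : w ≤ y := hw.2
    linarith

end Stmt3Aux

open Stmt3Aux in
/-- lower bound for the length of the interval and
upper bound for the number of zeros. -/
theorem stmt3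
    (μ M : ℕ → ℝ)
    (hμpos : ∀ j, 1 ≤ j → 0 < μ j)
    (hμmono : ∀ j, 1 ≤ j → μ j ≤ μ (j + 1))
    (hM0 : 0 < M 0)
    (hMrec : ∀ j, M (j + 1) = M j * μ (j + 1))
    (x y : ℝ) (hxy : x < y)
    (N : ℕ) (hN : 1 ≤ N)
    (f : ℝ → ℝ)
    (hf : ∃ U : Set ℝ, IsOpen U ∧ Set.Icc x y ⊆ U ∧ ContDiffOn ℝ (N : ℕ∞) f U)
    (hbd : ∀ j ≤ N, ∀ t ∈ Set.Icc x y, |iteratedDeriv j f t| ≤ M j)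
    (m : ℕ) (hm1 : 1 ≤ m) (hmN : m ≤ N)
    (z : ℕ → ℝ)
    (hzmem : ∀ i, 1 ≤ i → i ≤ m → z i ∈ Set.Icc x y)
    (hzmono : ∀ i j, 1 ≤ i → i ≤ j → j ≤ m → z i ≤ z j)
    (hzmult : ∀ i, 1 ≤ i → i ≤ m →
      ∀ l < ((Finset.Icc 1 m).filter (fun i' => z i' = z i)).card,
        iteratedDeriv l f (z i) = 0)
    (w : ℝ) (hw : w ∈ Set.Icc x y) (hwout : w ∉ Set.Ioo (z 1) (z m))
    (hb0pos : 0 < bFun f M N 0 w)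
    (j0 : ℕ) (hj0 : j0 = jZero (bFun f M N 0 w)) :
    (1 / Real.exp 1) * ∑ j ∈ Finset.Ioc j0 m, 1 / μ j < y - x ∧
    (m : ℕ∞) ≤ bangDegree μ (y - x) (bFun f M N 0 w) := by
  subst hj0
  have part1 : (1 / Real.exp 1) * ∑ j ∈ Finset.Ioc (jZero (bFun f M N 0 w)) m, 1 / μ j
      < y - x := by
    have hside : z m ≤ w ∨ w ≤ z 1 := by
      rcases le_or_gt (z m) w with h | h
      · exact Or.inl h
      · right
        by_contra h2
        push_neg at h2
        exact hwout ⟨h2, h⟩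
    rcases hside with hside | hside
    · exact core μ M hμpos hμmono hM0 hMrec x y hxy N hN f hf hbd m hm1 hmN z hzmem hzmono
        hzmult w hw hside hb0pos
    · -- reflection
      obtain ⟨U, hUopen, hUsub, hfU⟩ := hf
      set g : ℝ → ℝ := fun τ => f (-τ) with hgdef
      set z' : ℕ → ℝ := fun i => -z (m + 1 - i) with hz'def
      have hiterg : ∀ (n : ℕ) (τ : ℝ), iteratedDeriv n g τ
          = (-1 : ℝ) ^ n • iteratedDeriv n f (-τ) := by
        intro n τ
        exact iteratedDeriv_comp_neg n f τ
      have hitergabs : ∀ (n : ℕ) (τ : ℝ), |iteratedDeriv n g τ| = |iteratedDeriv n f (-τ)| := by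
        intro n τ
        rw [hiterg, smul_eq_mul, abs_mul, abs_pow, abs_neg, abs_one, one_pow, one_mul]
      have hbeq : bFun g M N 0 (-w) = bFun f M N 0 w := by
        unfold bFun
        congr 1
        apply Set.image_congr
        intro j _
        rw [hitergabs, neg_neg]
      have hcore := core μ M hμpos hμmono hM0 hMrec (-y) (-x) (by linarith) N hN g
        ⟨(fun τ : ℝ => -τ) ⁻¹' U, hUopen.preimage continuous_neg, ?_, ?_⟩
        ?_ m hm1 hmN z' ?_ ?_ ?_ (-w) ?_ ?_ ?_
      · rw [hbeq] at hcore
        have : -x - -y = y - x := by ring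
        rw [this] at hcore
        exact hcore
      · -- Icc (-y) (-x) ⊆ preimage
        intro τ hτ
        simp only [Set.mem_preimage]
        apply hUsub
        constructor
        · simp only [Set.mem_Icc] at hτ; linarith [hτ.2]
        · simp only [Set.mem_Icc] at hτ; linarith [hτ.1]
      · -- smoothness of g
        exact ContDiffOn.comp hfU (contDiff_neg.contDiffOn) (fun τ hτ => hτ)
      · -- bounds for g
        intro j hj τ hτ
        rw [hitergabs]
        apply hbd j hj
        simp only [Set.mem_Icc] at hτ ⊢
        constructor <;> linarith [hτ.1, hτ.2]
      · -- membership of z'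
        intro i h1 h2
        have := hzmem (m + 1 - i) (by omega) (by omega)
        simp only [Set.mem_Icc] at this ⊢
        rw [hz'def]
        constructor <;> simp only <;> linarith [this.1, this.2]
      · -- monotonicity of z'
        intro i j h1 h2 h3
        rw [hz'def]
        simp only [neg_le_neg_iff]
        exact hzmono (m + 1 - j) (m + 1 - i) (by omega) (by omega) (by omega)
      · -- multiplicities of z'
        intro i h1 h2 l hl
        have hcard : ((Finset.Icc 1 m).filter (fun i' => z' i' = z' i)).card
            = ((Finset.Icc 1 m).filter (fun i' => z i' = z (m + 1 - i))).card := by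
          apply Finset.card_nbij' (i := fun i' => m + 1 - i') (j := fun i' => m + 1 - i')
          · intro a ha
            simp only [Finset.mem_coe, Finset.mem_filter, Finset.mem_Icc] at ha ⊢
            obtain ⟨⟨ha1, ha2⟩, haeq⟩ := ha
            refine ⟨⟨by omega, by omega⟩, ?_⟩
            rw [hz'def] at haeq
            simp only at haeq
            have := neg_injective haeq
            exact this
          · intro a ha
            simp only [Finset.mem_coe, Finset.mem_filter, Finset.mem_Icc] at ha ⊢
            obtain ⟨⟨ha1, ha2⟩, haeq⟩ := ha
            refine ⟨⟨by omega, by omega⟩, ?_⟩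
            rw [hz'def]
            simp only
            rw [show m + 1 - (m + 1 - a) = a by omega]
            rw [haeq]
          · intro a ha
            simp only [Finset.mem_coe, Finset.mem_filter, Finset.mem_Icc] at ha
            show m + 1 - (m + 1 - a) = a
            omega
          · intro a ha
            simp only [Finset.mem_coe, Finset.mem_filter, Finset.mem_Icc] at ha
            show m + 1 - (m + 1 - a) = a
            omega
        rw [hcard] at hl
        have h0 := hzmult (m + 1 - i) (by omega) (by omega) l hl
        show iteratedDeriv l g (z' i) = 0
        rw [hiterg]
        have : -z' i = z (m + 1 - i) := by rw [hz'def]; simp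
        rw [this, h0, smul_zero]
      · -- -w ∈ Icc (-y) (-x)
        simp only [Set.mem_Icc] at hw ⊢
        constructor <;> linarith [hw.1, hw.2]
      · -- z' m ≤ -w
        rw [hz'def]
        simp only
        rw [show m + 1 - m = 1 by omega]
        linarith
      · -- positivity of bFun for g
        rw [hbeq]
        exact hb0pos
  refine ⟨part1, ?_⟩
  apply le_sSup
  refine ⟨m, ?_, rfl⟩
  simp only [Set.mem_setOf_eq]
  have hyx : 0 < y - x := sub_pos.mpr hxy
  have hrw : ∑ j ∈ Finset.Ioc (jZero (bFun f M N 0 w)) m, 1 / ((y - x) * μ j)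
      = (1 / (y - x)) * ∑ j ∈ Finset.Ioc (jZero (bFun f M N 0 w)) m, 1 / μ j := by
    rw [Finset.mul_sum]
    apply Finset.sum_congr rfl
    intro j _
    rw [div_mul_div_comm, one_mul]
  rw [hrw]
  rw [one_div, inv_mul_eq_div, div_lt_iff₀ hyx]
  have h2 := mul_lt_mul_of_pos_left part1 (Real.exp_pos 1)
  have h3 : Real.exp 1 * ((1 / Real.exp 1) * ∑ j ∈ Finset.Ioc (jZero (bFun f M N 0 w)) m, 1 / μ j)
      = ∑ j ∈ Finset.Ioc (jZero (bFun f M N 0 w)) m, 1 / μ j := by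
    rw [← mul_assoc, mul_one_div, div_self (ne_of_gt (Real.exp_pos 1)), one_mul]
  rw [h3] at h2
  linarith
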